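/- For the three-dimensional B2-crystal model, if L>2 then the infimum of the energy E_L over admissible pairs satisfying the horizontal-shear boundary condition is zero; in fact there exists an admissible pair (u,β) with E_L(u,β)=0. -/

import Mathlib

open MeasureTheory Set Filter Topology
open scoped ENNReal NNReal

noncomputable section

abbrev Pt3 := Fin 3 → ℝ
abbrev Mat3 := Matrix (Fin 3) (Fin 3) ℝ

/-- The box Ω_L = (0,1) × (0,L) × (0,1). -/
def Omega3 (L : ℝ) : Set Pt3 :=
  {x | x 0 ∈ Ioo (0:ℝ) 1 ∧ x 1 ∈ Ioo (0:ℝ) L ∧ x 2 ∈ Ioo (0:ℝ) 1}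

/-- Partial derivative ∂_j of a scalar function on ℝ³. -/
def pd3 (j : Fin 3) (f : Pt3 → ℝ) (x : Pt3) : ℝ := fderiv ℝ f x (Pi.single j 1)

/-- C¹ test function compactly supported in Ω_L. -/
def IsTest3 (L : ℝ) (f : Pt3 → ℝ) : Prop :=
  ContDiff ℝ 1 f ∧ HasCompactSupport f ∧ tsupport f ⊆ Omega3 L

/-- Du is the weak (distributional) gradient of u on Ω_L. -/
def IsWeakGradient3 (L : ℝ) (u : Pt3 → Pt3) (Du : Pt3 → Mat3) : Prop :=
  ∀ f : Pt3 → ℝ, IsTest3 L f → ∀ i j,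
    ∫ x in Omega3 L, u x i * pd3 j f x = - ∫ x in Omega3 L, Du x i j * f x

/-- Symmetric part of a matrix. -/
def symPart3 (M : Mat3) : Mat3 := (2:ℝ)⁻¹ • (M + M.transpose)

/-- Squared Frobenius norm. -/
def normSq3 (M : Mat3) : ℝ := ∑ i, ∑ j, (M i j) ^ 2

/-- The rotated orthonormal slip-plane frame:
e_ξ = (1,1,0)/√2, e_η = (-1,1,0)/√2, e_ζ = (0,0,1). -/
def eXi3 : Pt3 := ![1 / Real.sqrt 2, 1 / Real.sqrt 2, 0]
def eEta3 : Pt3 := ![-(1 / Real.sqrt 2), 1 / Real.sqrt 2, 0]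
def eZeta3 : Pt3 := ![0, 0, 1]

/-- Relaxed single-slip condition: a.e. β(x) = b ⊗ e for one of the three slip-plane
normals e and some Burgers vector b orthogonal to e. -/
def SingleSlip3 (L : ℝ) (β : Pt3 → Mat3) : Prop :=
  ∀ᵐ x ∂(volume.restrict (Omega3 L)),
    ∃ e ∈ ({eXi3, eEta3, eZeta3} : Set Pt3), ∃ b : Pt3,
      (∑ k, b k * e k) = 0 ∧ ∀ i j, β x i j = b i * e j

/-- Curl of the i-th row of the matrix test field Φ. -/
def curlRow (Φ : Pt3 → Mat3) (i : Fin 3) (x : Pt3) : Fin 3 → ℝ :=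
  ![pd3 1 (fun y => Φ y i 2) x - pd3 2 (fun y => Φ y i 1) x,
    pd3 2 (fun y => Φ y i 0) x - pd3 0 (fun y => Φ y i 2) x,
    pd3 0 (fun y => Φ y i 1) x - pd3 1 (fun y => Φ y i 0) x]

/-- Total variation of the row-wise distributional curl of β on Ω_L. -/
def TVcurl3 (L : ℝ) (β : Pt3 → Mat3) : ℝ≥0∞ :=
  sSup {t | ∃ Φ : Pt3 → Mat3,
    (∀ i j, IsTest3 L (fun x => Φ x i j)) ∧ (∀ x i j, Φ x i j ∈ Icc (-1:ℝ) 1) ∧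
    t = ENNReal.ofReal (∑ i, ∫ x in Omega3 L, ∑ j, β x i j * curlRow Φ i x j)}

/-- The elastic part of the energy. -/
def Elastic3 (L : ℝ) (Du β : Pt3 → Mat3) : ℝ≥0∞ :=
  ∫⁻ x in Omega3 L, ENNReal.ofReal (normSq3 (symPart3 (Du x - β x)))

/-- The energy E_L(u,β) (expressed through the weak gradient Du of u). -/
def Energy3 (L σ : ℝ) (Du β : Pt3 → Mat3) : ℝ≥0∞ :=
  Elastic3 L Du β + ENNReal.ofReal σ * TVcurl3 L β

/-- Admissible pair (u,β) with Du the weak gradient of u, including the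
horizontal-shear boundary condition u = 0 at x₂ = 0, u = γ(1,0,0) at x₂ = L. -/
def IsAdmissible3 (L γ : ℝ) (u : Pt3 → Pt3) (Du β : Pt3 → Mat3) : Prop :=
  ContinuousOn u (closure (Omega3 L)) ∧
  IsWeakGradient3 L u Du ∧
  (∀ i j, MemLp (fun x => Du x i j) 2 (volume.restrict (Omega3 L))) ∧
  (∀ i j, LocallyIntegrableOn (fun x => β x i j) (Omega3 L)) ∧
  SingleSlip3 L β ∧
  (∀ x ∈ closure (Omega3 L), x 1 = 0 → u x = 0) ∧
  (∀ x ∈ closure (Omega3 L), x 1 = L → u x = γ • ![1, 0, 0])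

/-! ### Auxiliary development -/

open scoped ContDiff

lemma integral_pd3_eq_zero (g : Pt3 → ℝ) (hg : ContDiff ℝ 1 g) (h2 : HasCompactSupport g)
    (j : Fin 3) : ∫ x : Pt3, pd3 j g x = 0 := by
  obtain ⟨r, hr⟩ := h2.isBounded.subset_closedBall 0
  set R : ℝ := max r 0 + 1 with hR
  have hRpos : 0 < R := by positivity
  have hrR : r < R := by
    have := le_max_left r (0:ℝ); simp only [hR]; linarith
  have hout : ∀ x : Pt3, ∀ i : Fin 3, R ≤ |x i| → x ∉ tsupport g := by
    intro x i hi hx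
    have h1 : ‖x‖ ≤ r := by simpa [dist_eq_norm] using hr hx
    have h2' : |x i| ≤ ‖x‖ := norm_le_pi_norm x i
    linarith
  have hdivsum : (fun x : Pt3 => ∑ i, (if i = j then fderiv ℝ g x else 0) (Pi.single i 1))
      = fun x => pd3 j g x := by
    funext x
    rw [Finset.sum_eq_single j] <;> simp +contextual [pd3]
  have key := MeasureTheory.integral_divergence_of_hasFDerivAt_off_countable'
    (fun _ => -R) (fun _ => R) (fun _ => by dsimp; linarith)
    (fun i x => if i = j then g x else 0)
    (fun i x => if i = j then fderiv ℝ g x else 0) ∅ countable_empty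
    (fun i => by
      by_cases h : i = j <;> simp [h, continuousOn_const, (hg.continuous).continuousOn])
    (fun x _ i => by
      by_cases h : i = j
      · simpa [h] using (hg.differentiable one_ne_zero x).hasFDerivAt
      · simpa [h] using hasFDerivAt_const (0:ℝ) x)
    (by
      rw [hdivsum]
      exact ((hg.continuous_fderiv one_ne_zero).clm_apply
        continuous_const).continuousOn.integrableOn_compact isCompact_Icc)
  rw [hdivsum] at key
  have hfaces : ∀ i : Fin 3, i ∈ Finset.univ →
      ((∫ x in Icc ((fun _ => -R : Pt3) ∘ Fin.succAbove i) ((fun _ => R : Pt3) ∘ Fin.succAbove i),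
        (if i = j then g (Fin.insertNth i ((fun _ => R : Pt3) i) x) else 0)) -
       ∫ x in Icc ((fun _ => -R : Pt3) ∘ Fin.succAbove i) ((fun _ => R : Pt3) ∘ Fin.succAbove i),
        (if i = j then g (Fin.insertNth i ((fun _ => -R : Pt3) i) x) else 0)) = 0 := by
    intro i _
    by_cases h : i = j
    · subst h
      have hz1 : ∀ y : Fin 2 → ℝ, g (Fin.insertNth i R y) = 0 := fun y =>
        image_eq_zero_of_notMem_tsupport
          (hout _ i (by simp [Fin.insertNth_apply_same, le_abs_self]))
      have hz2 : ∀ y : Fin 2 → ℝ, g (Fin.insertNth i (-R) y) = 0 := fun y =>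
        image_eq_zero_of_notMem_tsupport
          (hout _ i (by rw [Fin.insertNth_apply_same, abs_neg]; exact le_abs_self R))
      simp [hz1, hz2]
    · simp [h]
  rw [Finset.sum_eq_zero hfaces] at key
  have hcompl : ∀ x : Pt3, x ∉ Icc (fun _ => -R : Pt3) (fun _ => R) → pd3 j g x = 0 := by
    intro x hx
    rw [Set.mem_Icc] at hx
    have hx' : ¬ ((∀ i, -R ≤ x i) ∧ (∀ i, x i ≤ R)) := by simpa [Pi.le_def] using hx
    have hxt : x ∉ tsupport g := by
      rcases not_and_or.1 hx' with h | h <;> push_neg at h <;> obtain ⟨i, hi⟩ := h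
      · exact hout x i ((neg_le_abs (x i)).trans' (by linarith))
      · exact hout x i ((le_abs_self (x i)).trans' (by linarith))
    have hfz : fderiv ℝ g x = 0 :=
      Function.notMem_support.1 fun hmem => hxt (support_fderiv_subset ℝ hmem)
    simp [pd3, hfz]
  rw [← MeasureTheory.setIntegral_eq_integral_of_forall_compl_eq_zero hcompl]
  exact key

lemma continuous_pd3 {f : Pt3 → ℝ} (hf : ContDiff ℝ 1 f) (j : Fin 3) :
    Continuous (pd3 j f) :=
  (hf.continuous_fderiv one_ne_zero).clm_apply continuous_const

lemma pd3_zero_of_nmem {f : Pt3 → ℝ} {x : Pt3} (hx : x ∉ tsupport f) (j : Fin 3) :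
    pd3 j f x = 0 := by
  have hfz : fderiv ℝ f x = 0 :=
    Function.notMem_support.1 fun hmem => hx (support_fderiv_subset ℝ hmem)
  simp [pd3, hfz]

lemma integrable_mul_pd3 {L : ℝ} {a F : Pt3 → ℝ} (ha : ContDiff ℝ 1 a) (hF : IsTest3 L F)
    (j : Fin 3) : Integrable (fun x => a x * pd3 j F x) :=
  (ha.continuous.mul (continuous_pd3 hF.1 j)).integrable_of_hasCompactSupport
    (HasCompactSupport.intro hF.2.1 fun x hx => by rw [Pi.mul_apply, pd3_zero_of_nmem hx, mul_zero])

lemma integrable_pd3_mul {L : ℝ} {a F : Pt3 → ℝ} (ha : ContDiff ℝ 1 a) (hF : IsTest3 L F)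
    (j : Fin 3) : Integrable (fun x => pd3 j a x * F x) :=
  ((continuous_pd3 ha j).mul hF.1.continuous).integrable_of_hasCompactSupport
    (HasCompactSupport.intro hF.2.1 fun x hx => by
      rw [Pi.mul_apply, image_eq_zero_of_notMem_tsupport hx, mul_zero])

lemma ibp3 {L : ℝ} (a F : Pt3 → ℝ) (ha : ContDiff ℝ 1 a) (hF : IsTest3 L F) (j : Fin 3) :
    ∫ x in Omega3 L, a x * pd3 j F x = - ∫ x in Omega3 L, pd3 j a x * F x := by
  have hg : ContDiff ℝ 1 (fun x => a x * F x) := ha.mul hF.1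
  have hgc : HasCompactSupport (fun x => a x * F x) :=
    HasCompactSupport.intro hF.2.1 fun x hx => by
      rw [image_eq_zero_of_notMem_tsupport hx, mul_zero]
  have hpdg : ∀ x, pd3 j (fun y => a y * F y) x = pd3 j a x * F x + a x * pd3 j F x := by
    intro x
    have := fderiv_fun_mul (ha.differentiable one_ne_zero x) (hF.1.differentiable one_ne_zero x)
    simp only [pd3, this, ContinuousLinearMap.add_apply, ContinuousLinearMap.smul_apply,
      smul_eq_mul]
    ring
  have h0 : ∫ x : Pt3, (pd3 j a x * F x + a x * pd3 j F x) = 0 := by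
    rw [show (fun x : Pt3 => pd3 j a x * F x + a x * pd3 j F x)
        = fun x => pd3 j (fun y => a y * F y) x from funext fun x => (hpdg x).symm]
    exact integral_pd3_eq_zero _ hg hgc j
  rw [integral_add (integrable_pd3_mul ha hF j) (integrable_mul_pd3 ha hF j)] at h0
  have e1 : ∫ x in Omega3 L, a x * pd3 j F x = ∫ x : Pt3, a x * pd3 j F x :=
    setIntegral_eq_integral_of_forall_compl_eq_zero fun x hx => by
      rw [pd3_zero_of_nmem (fun hm => hx (hF.2.2 hm)) j, mul_zero]
  have e2 : ∫ x in Omega3 L, pd3 j a x * F x = ∫ x : Pt3, pd3 j a x * F x :=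
    setIntegral_eq_integral_of_forall_compl_eq_zero fun x hx => by
      rw [image_eq_zero_of_notMem_tsupport (fun hm => hx (hF.2.2 hm)), mul_zero]
  rw [e1, e2]; linarith

lemma pair_zero {L : ℝ} (a b F : Pt3 → ℝ) (ha : ContDiff ℝ 1 a) (hb : ContDiff ℝ 1 b)
    (hF : IsTest3 L F) (k l : Fin 3) (hsym : ∀ x, pd3 l a x = pd3 k b x) :
    ∫ x in Omega3 L, (a x * pd3 l F x - b x * pd3 k F x) = 0 := by
  rw [integral_sub (integrable_mul_pd3 ha hF l).integrableOn
    (integrable_mul_pd3 hb hF k).integrableOn, ibp3 a F ha hF l, ibp3 b F hb hF k]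
  have : ∫ x in Omega3 L, pd3 l a x * F x = ∫ x in Omega3 L, pd3 k b x * F x :=
    integral_congr_ae (Eventually.of_forall fun x => by show pd3 l a x * F x = pd3 k b x * F x; rw [hsym])
  linarith

/-! ### The explicit construction -/

def etaL : Pt3 →L[ℝ] ℝ :=
  (Real.sqrt 2)⁻¹ • (ContinuousLinearMap.proj (R := ℝ) (φ := fun _ : Fin 3 => ℝ) 1
    - ContinuousLinearMap.proj 0)
def xiL : Pt3 →L[ℝ] ℝ :=
  (Real.sqrt 2)⁻¹ • (ContinuousLinearMap.proj (R := ℝ) (φ := fun _ : Fin 3 => ℝ) 1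
    + ContinuousLinearMap.proj 0)

lemma etaL_apply (x : Pt3) : etaL x = (x 1 - x 0) / Real.sqrt 2 := by
  simp [etaL, div_eq_inv_mul, sub_eq_add_neg, mul_add]

lemma xiL_apply (x : Pt3) : xiL x = (x 1 + x 0) / Real.sqrt 2 := by
  simp [xiL, div_eq_inv_mul]; ring

lemma etaL_single (j : Fin 3) : etaL (Pi.single j 1) = eEta3 j := by
  fin_cases j <;> simp [etaL_apply, eEta3, div_eq_inv_mul]

lemma xiL_single (j : Fin 3) : xiL (Pi.single j 1) = eXi3 j := by
  fin_cases j <;> simp [xiL_apply, eXi3, div_eq_inv_mul]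

lemma pd3_two_comp (g h : ℝ → ℝ) (hg : Differentiable ℝ g) (hh : Differentiable ℝ h)
    (c d : ℝ) (j : Fin 3) (x : Pt3) :
    pd3 j (fun y => g (etaL y) * c + h (xiL y) * d) x
      = deriv g (etaL x) * c * eEta3 j + deriv h (xiL x) * d * eXi3 j := by
  have h1 : HasFDerivAt (fun y => g (etaL y)) (deriv g (etaL x) • (etaL : Pt3 →L[ℝ] ℝ)) x :=
    (hg <| etaL x).hasDerivAt.comp_hasFDerivAt x etaL.hasFDerivAt
  have h2 : HasFDerivAt (fun y => h (xiL y)) (deriv h (xiL x) • (xiL : Pt3 →L[ℝ] ℝ)) x :=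
    (hh <| xiL x).hasDerivAt.comp_hasFDerivAt x xiL.hasFDerivAt
  rw [pd3, ((h1.mul_const c).fun_add (h2.mul_const d)).fderiv]
  simp [etaL_single, xiL_single, smul_eq_mul]
  ring

def dlt (L : ℝ) : ℝ := (L - 2) / (2 * Real.sqrt 2)
def ccc (L : ℝ) : ℝ := dlt L + Real.sqrt 2
def Af (L γ : ℝ) : ℝ → ℝ := fun t => γ / Real.sqrt 2 * Real.smoothTransition (t / dlt L)
def Bf (L γ : ℝ) : ℝ → ℝ :=
  fun t => -(γ / Real.sqrt 2) * Real.smoothTransition ((t - ccc L) / dlt L)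
def uu (L γ : ℝ) : Pt3 → Pt3 :=
  fun x i => Af L γ (etaL x) * eXi3 i + Bf L γ (xiL x) * eEta3 i
def DD (L γ : ℝ) (x : Pt3) : Mat3 := Matrix.of fun i j =>
  deriv (Af L γ) (etaL x) * (eXi3 i * eEta3 j) + deriv (Bf L γ) (xiL x) * (eEta3 i * eXi3 j)

lemma contDiff_Af (L γ : ℝ) : ContDiff ℝ ∞ (Af L γ) :=
  contDiff_const.mul (Real.smoothTransition.contDiff.comp (contDiff_id.div_const _))

lemma contDiff_Bf (L γ : ℝ) : ContDiff ℝ ∞ (Bf L γ) :=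
  contDiff_const.mul
    (Real.smoothTransition.contDiff.comp ((contDiff_id.sub contDiff_const).div_const _))

lemma diff_Af (L γ : ℝ) : Differentiable ℝ (Af L γ) := (contDiff_Af L γ).differentiable (by simp)
lemma diff_Bf (L γ : ℝ) : Differentiable ℝ (Bf L γ) := (contDiff_Bf L γ).differentiable (by simp)
lemma diff_dAf (L γ : ℝ) : Differentiable ℝ (deriv (Af L γ)) :=
  ((contDiff_infty_iff_deriv.1 (contDiff_Af L γ)).2).differentiable (by simp)
lemma diff_dBf (L γ : ℝ) : Differentiable ℝ (deriv (Bf L γ)) :=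
  ((contDiff_infty_iff_deriv.1 (contDiff_Bf L γ)).2).differentiable (by simp)

lemma pd3_uu (L γ : ℝ) (i j : Fin 3) (x : Pt3) :
    pd3 j (fun y => uu L γ y i) x = DD L γ x i j := by
  rw [show (fun y => uu L γ y i)
      = fun y => Af L γ (etaL y) * eXi3 i + Bf L γ (xiL y) * eEta3 i from rfl,
    pd3_two_comp _ _ (diff_Af L γ) (diff_Bf L γ)]
  show _ = deriv (Af L γ) (etaL x) * (eXi3 i * eEta3 j)
    + deriv (Bf L γ) (xiL x) * (eEta3 i * eXi3 j)
  ring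

lemma contDiff_DD (L γ : ℝ) (i j : Fin 3) : ContDiff ℝ 1 (fun y => DD L γ y i j) := by
  have : (fun y => DD L γ y i j) = fun y =>
      (deriv (Af L γ) ∘ etaL) y * (eXi3 i * eEta3 j)
        + (deriv (Bf L γ) ∘ xiL) y * (eEta3 i * eXi3 j) := rfl
  rw [this]
  exact ((((contDiff_infty_iff_deriv.1 (contDiff_Af L γ)).2).comp etaL.contDiff).mul
      contDiff_const).add
    ((((contDiff_infty_iff_deriv.1 (contDiff_Bf L γ)).2).comp xiL.contDiff).mul
      contDiff_const) |>.of_le (by exact_mod_cast le_top)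

lemma pd3_DD_symm (L γ : ℝ) (i j k : Fin 3) (x : Pt3) :
    pd3 k (fun y => DD L γ y i j) x = pd3 j (fun y => DD L γ y i k) x := by
  rw [show (fun y => DD L γ y i j) = fun y =>
      deriv (Af L γ) (etaL y) * (eXi3 i * eEta3 j)
        + deriv (Bf L γ) (xiL y) * (eEta3 i * eXi3 j) from rfl,
    show (fun y => DD L γ y i k) = fun y =>
      deriv (Af L γ) (etaL y) * (eXi3 i * eEta3 k)
        + deriv (Bf L γ) (xiL y) * (eEta3 i * eXi3 k) from rfl,
    pd3_two_comp _ _ (diff_dAf L γ) (diff_dBf L γ),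
    pd3_two_comp _ _ (diff_dAf L γ) (diff_dBf L γ)]
  ring

/-! basic facts about √2 and the parameters -/

lemma s2_pos : (0:ℝ) < Real.sqrt 2 := Real.sqrt_pos.2 (by norm_num)
lemma s2_sq : Real.sqrt 2 * Real.sqrt 2 = 2 := Real.mul_self_sqrt (by norm_num)

section params
variable {L γ : ℝ} (hL : 2 < L)

lemma dlt_pos (hL : 2 < L) : 0 < dlt L := by
  have := s2_pos; exact div_pos (by linarith) (by positivity)

lemma Af_nonpos (γ : ℝ) (hL : 2 < L) {t : ℝ} (ht : t ≤ 0) : Af L γ t = 0 := by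
  rw [Af, Real.smoothTransition.zero_of_nonpos
    (div_nonpos_of_nonpos_of_nonneg ht (dlt_pos hL).le), mul_zero]

lemma Af_ge (γ : ℝ) (hL : 2 < L) {t : ℝ} (ht : dlt L ≤ t) : Af L γ t = γ / Real.sqrt 2 := by
  rw [Af, Real.smoothTransition.one_of_one_le ((one_le_div (dlt_pos hL)).2 ht), mul_one]

lemma Bf_le (γ : ℝ) (hL : 2 < L) {t : ℝ} (ht : t ≤ ccc L) : Bf L γ t = 0 := by
  rw [Bf, Real.smoothTransition.zero_of_nonpos
    (div_nonpos_of_nonpos_of_nonneg (by linarith) (dlt_pos hL).le), mul_zero]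

lemma Bf_ge (γ : ℝ) (hL : 2 < L) {t : ℝ} (ht : ccc L + dlt L ≤ t) :
    Bf L γ t = -(γ / Real.sqrt 2) := by
  rw [Bf, Real.smoothTransition.one_of_one_le ((one_le_div (dlt_pos hL)).2 (by linarith)),
    mul_one]

lemma deriv_Af_gt (γ : ℝ) (hL : 2 < L) {t : ℝ} (ht : dlt L < t) : deriv (Af L γ) t = 0 := by
  have hev : Af L γ =ᶠ[𝓝 t] fun _ => γ / Real.sqrt 2 :=
    eventuallyEq_of_mem (Ioi_mem_nhds ht) fun s hs => Af_ge γ hL (le_of_lt hs)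
  rw [hev.deriv_eq, deriv_const]

lemma deriv_Bf_lt (γ : ℝ) (hL : 2 < L) {t : ℝ} (ht : t < ccc L) : deriv (Bf L γ) t = 0 := by
  have hev : Bf L γ =ᶠ[𝓝 t] fun _ => 0 :=
    eventuallyEq_of_mem (Iio_mem_nhds ht) fun s hs => Bf_le γ hL (le_of_lt hs)
  rw [hev.deriv_eq, deriv_const]

end params

/-! ### facts about Omega3 -/

lemma isOpen_Omega3 (L : ℝ) : IsOpen (Omega3 L) := by
  have : Omega3 L = ((fun x : Pt3 => x 0) ⁻¹' Ioo 0 1) ∩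
      (((fun x : Pt3 => x 1) ⁻¹' Ioo 0 L) ∩ ((fun x : Pt3 => x 2) ⁻¹' Ioo 0 1)) := rfl
  rw [this]
  exact ((isOpen_Ioo.preimage (continuous_apply 0)).inter
    ((isOpen_Ioo.preimage (continuous_apply 1)).inter (isOpen_Ioo.preimage (continuous_apply 2))))

lemma closure_Omega3_subset (L : ℝ) : closure (Omega3 L) ⊆
    {x : Pt3 | x 0 ∈ Icc (0:ℝ) 1 ∧ x 1 ∈ Icc (0:ℝ) L ∧ x 2 ∈ Icc (0:ℝ) 1} := by
  apply closure_minimal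
  · rintro x ⟨h0, h1, h2⟩
    exact ⟨Ioo_subset_Icc_self h0, Ioo_subset_Icc_self h1, Ioo_subset_Icc_self h2⟩
  · exact ((isClosed_Icc.preimage (continuous_apply 0)).inter
      ((isClosed_Icc.preimage (continuous_apply 1)).inter
        (isClosed_Icc.preimage (continuous_apply 2))))

lemma isBounded_Omega3 (L : ℝ) : Bornology.IsBounded (Omega3 L) := by
  rw [isBounded_iff_forall_norm_le]
  refine ⟨max 1 L, fun x hx => ?_⟩
  obtain ⟨h0, h1, h2⟩ := hx
  have hnn : (0:ℝ) ≤ max 1 L := le_trans zero_le_one (le_max_left 1 L)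
  rw [pi_norm_le_iff_of_nonneg hnn]
  simp only [mem_Ioo] at h0 h1 h2
  intro i
  fin_cases i
  · show ‖x 0‖ ≤ max 1 L
    rw [Real.norm_eq_abs, abs_of_pos h0.1]
    exact h0.2.le.trans (le_max_left 1 L)
  · show ‖x 1‖ ≤ max 1 L
    rw [Real.norm_eq_abs, abs_of_pos h1.1]
    exact h1.2.le.trans (le_max_right 1 L)
  · show ‖x 2‖ ≤ max 1 L
    rw [Real.norm_eq_abs, abs_of_pos h2.1]
    exact h2.2.le.trans (le_max_left 1 L)

lemma isCompact_closure_Omega3 (L : ℝ) : IsCompact (closure (Omega3 L)) :=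
  Metric.isCompact_of_isClosed_isBounded isClosed_closure (isBounded_Omega3 L).closure

lemma volume_Omega3_lt_top (L : ℝ) : volume (Omega3 L) < ⊤ :=
  lt_of_le_of_lt (measure_mono subset_closure) (isCompact_closure_Omega3 L).measure_lt_top

section main
variable {L γ : ℝ}

lemma contDiff_uu (L γ : ℝ) (i : Fin 3) : ContDiff ℝ 1 (fun y => uu L γ y i) := by
  have : (fun y => uu L γ y i)
      = fun y => (Af L γ ∘ etaL) y * eXi3 i + (Bf L γ ∘ xiL) y * eEta3 i := rfl
  rw [this]
  exact (((contDiff_Af L γ).comp etaL.contDiff).mul contDiff_const).add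
    (((contDiff_Bf L γ).comp xiL.contDiff).mul contDiff_const) |>.of_le (by exact_mod_cast le_top)

lemma continuous_uu (L γ : ℝ) : Continuous (uu L γ) :=
  continuous_pi fun i => (contDiff_uu L γ i).continuous

lemma uu_bottom (hL : 2 < L) (γ : ℝ) :
    ∀ x ∈ closure (Omega3 L), x 1 = 0 → uu L γ x = 0 := by
  intro x hx h1
  obtain ⟨hx0, hx1, hx2⟩ := closure_Omega3_subset L hx
  have he : etaL x ≤ 0 := by
    rw [etaL_apply, h1]
    exact div_nonpos_of_nonpos_of_nonneg (by linarith [hx0.1]) s2_pos.le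
  have hxi : xiL x ≤ ccc L := by
    rw [xiL_apply, h1]
    have h2 : (0 + x 0) / Real.sqrt 2 ≤ Real.sqrt 2 := by
      rw [div_le_iff₀ s2_pos, s2_sq]; linarith [hx0.2]
    have := dlt_pos hL
    unfold ccc; linarith
  funext i
  show Af L γ (etaL x) * eXi3 i + Bf L γ (xiL x) * eEta3 i = 0
  rw [Af_nonpos γ hL he, Bf_le γ hL hxi]; ring

lemma uu_top (hL : 2 < L) (γ : ℝ) :
    ∀ x ∈ closure (Omega3 L), x 1 = L → uu L γ x = γ • ![1, 0, 0] := by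
  intro x hx h1
  obtain ⟨hx0, hx1, hx2⟩ := closure_Omega3_subset L hx
  have he : dlt L ≤ etaL x := by
    rw [etaL_apply, h1, dlt]
    rw [div_le_div_iff₀ (by positivity) s2_pos]
    nlinarith [s2_sq, s2_pos, hx0.2]
  have hxi : ccc L + dlt L ≤ xiL x := by
    rw [xiL_apply, h1, ccc, dlt]
    have key : ((L - 2) / (2 * Real.sqrt 2) + Real.sqrt 2) + (L - 2) / (2 * Real.sqrt 2)
        ≤ (L + x 0) / Real.sqrt 2 := by
      rw [div_add' _ _ _ (by positivity), div_add_div _ _ (by positivity) (by positivity),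
        div_le_div_iff₀ (by positivity) s2_pos]
      nlinarith [s2_sq, s2_pos, hx0.1]
    linarith [key]
  rw [show uu L γ x = fun i => Af L γ (etaL x) * eXi3 i + Bf L γ (xiL x) * eEta3 i from rfl,
    Af_ge γ hL he, Bf_ge γ hL hxi]
  funext i
  fin_cases i <;>
    simp [eXi3, eEta3, Pi.smul_apply, smul_eq_mul] <;>
    field_simp <;> nlinarith [s2_sq, s2_pos, congrArg (fun t => γ * t) (Real.sq_sqrt (show (0:ℝ) ≤ 2 by norm_num))]

lemma singleSlip_DD (hL : 2 < L) (γ : ℝ) : SingleSlip3 L (DD L γ) := by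
  refine (ae_restrict_mem (isOpen_Omega3 L).measurableSet).mono ?_
  intro x hx
  obtain ⟨hx0, hx1, hx2⟩ := hx
  have hrel : xiL x = etaL x + Real.sqrt 2 * x 0 := by
    rw [etaL_apply, xiL_apply]
    field_simp
    linear_combination (-(x 0)) * s2_sq
  by_cases hc : etaL x ≤ dlt L
  · have hxi : xiL x < ccc L := by
      have h2 : Real.sqrt 2 * x 0 < Real.sqrt 2 := by nlinarith [s2_pos, hx0.2]
      rw [hrel, ccc]; linarith
    refine ⟨eEta3, by simp, fun i => deriv (Af L γ) (etaL x) * eXi3 i, ?_, ?_⟩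
    · simp only [Fin.sum_univ_three, eXi3, eEta3, Matrix.cons_val_zero, Matrix.cons_val_one,
        Matrix.head_cons, Matrix.cons_val_two, Matrix.tail_cons]
      ring
    · intro i j
      show deriv (Af L γ) (etaL x) * (eXi3 i * eEta3 j)
        + deriv (Bf L γ) (xiL x) * (eEta3 i * eXi3 j) = _
      rw [deriv_Bf_lt γ hL hxi]; ring
  · push_neg at hc
    refine ⟨eXi3, by simp, fun i => deriv (Bf L γ) (xiL x) * eEta3 i, ?_, ?_⟩
    · simp only [Fin.sum_univ_three, eXi3, eEta3, Matrix.cons_val_zero, Matrix.cons_val_one,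
        Matrix.head_cons, Matrix.cons_val_two, Matrix.tail_cons]
      ring
    · intro i j
      show deriv (Af L γ) (etaL x) * (eXi3 i * eEta3 j)
        + deriv (Bf L γ) (xiL x) * (eEta3 i * eXi3 j) = _
      rw [deriv_Af_gt γ hL hc]; ring

lemma rowint_zero (L γ : ℝ) (Φ : Pt3 → Mat3) (hΦ : ∀ i j, IsTest3 L (fun x => Φ x i j))
    (i : Fin 3) : ∫ x in Omega3 L, ∑ j, DD L γ x i j * curlRow Φ i x j = 0 := by
  have hdd : ∀ j, ContDiff ℝ 1 (fun y => DD L γ y i j) := contDiff_DD L γ i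
  have h1 := pair_zero (fun x => DD L γ x i 0) (fun x => DD L γ x i 1) (fun x => Φ x i 2)
    (hdd 0) (hdd 1) (hΦ i 2) 0 1 (pd3_DD_symm L γ i 0 1)
  have h2 := pair_zero (fun x => DD L γ x i 1) (fun x => DD L γ x i 2) (fun x => Φ x i 0)
    (hdd 1) (hdd 2) (hΦ i 0) 1 2 (pd3_DD_symm L γ i 1 2)
  have h3 := pair_zero (fun x => DD L γ x i 2) (fun x => DD L γ x i 0) (fun x => Φ x i 1)
    (hdd 2) (hdd 0) (hΦ i 1) 2 0 (pd3_DD_symm L γ i 2 0)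
  have hG1 : IntegrableOn (fun x => DD L γ x i 0 * pd3 1 (fun y => Φ y i 2) x
      - DD L γ x i 1 * pd3 0 (fun y => Φ y i 2) x) (Omega3 L) :=
    ((integrable_mul_pd3 (hdd 0) (hΦ i 2) 1).sub
      (integrable_mul_pd3 (hdd 1) (hΦ i 2) 0)).integrableOn
  have hG2 : IntegrableOn (fun x => DD L γ x i 1 * pd3 2 (fun y => Φ y i 0) x
      - DD L γ x i 2 * pd3 1 (fun y => Φ y i 0) x) (Omega3 L) :=
    ((integrable_mul_pd3 (hdd 1) (hΦ i 0) 2).sub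
      (integrable_mul_pd3 (hdd 2) (hΦ i 0) 1)).integrableOn
  have hG3 : IntegrableOn (fun x => DD L γ x i 2 * pd3 0 (fun y => Φ y i 1) x
      - DD L γ x i 0 * pd3 2 (fun y => Φ y i 1) x) (Omega3 L) :=
    ((integrable_mul_pd3 (hdd 2) (hΦ i 1) 0).sub
      (integrable_mul_pd3 (hdd 0) (hΦ i 1) 2)).integrableOn
  have hexp : ∀ x, (∑ j, DD L γ x i j * curlRow Φ i x j)
      = (DD L γ x i 0 * pd3 1 (fun y => Φ y i 2) x
          - DD L γ x i 1 * pd3 0 (fun y => Φ y i 2) x)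
        + ((DD L γ x i 1 * pd3 2 (fun y => Φ y i 0) x
          - DD L γ x i 2 * pd3 1 (fun y => Φ y i 0) x)
        + (DD L γ x i 2 * pd3 0 (fun y => Φ y i 1) x
          - DD L γ x i 0 * pd3 2 (fun y => Φ y i 1) x)) := by
    intro x
    simp only [Fin.sum_univ_three, curlRow, Matrix.cons_val_zero, Matrix.cons_val_one,
      Matrix.head_cons, Matrix.cons_val_two, Matrix.tail_cons]
    ring
  have hG23 : IntegrableOn (fun x => (DD L γ x i 1 * pd3 2 (fun y => Φ y i 0) x
      - DD L γ x i 2 * pd3 1 (fun y => Φ y i 0) x)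
    + (DD L γ x i 2 * pd3 0 (fun y => Φ y i 1) x
      - DD L γ x i 0 * pd3 2 (fun y => Φ y i 1) x)) (Omega3 L) := hG2.add hG3
  rw [integral_congr_ae (Eventually.of_forall hexp), integral_add hG1 hG23,
    integral_add hG2 hG3, h1, h2, h3]
  ring

lemma tsupport_zero_fun : tsupport (fun _ : Pt3 => (0:ℝ)) = ∅ := by
  simp [tsupport, Function.support]

lemma isTest_zero (L : ℝ) : IsTest3 L (fun _ : Pt3 => (0:ℝ)) :=
  ⟨contDiff_const, by rw [HasCompactSupport, tsupport_zero_fun]; exact isCompact_empty,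
    by rw [tsupport_zero_fun]; exact empty_subset _⟩

lemma TVcurl_DD (L γ : ℝ) : TVcurl3 L (DD L γ) = 0 := by
  have hset : {t | ∃ Φ : Pt3 → Mat3,
      (∀ i j, IsTest3 L (fun x => Φ x i j)) ∧ (∀ x i j, Φ x i j ∈ Icc (-1:ℝ) 1) ∧
      t = ENNReal.ofReal (∑ i, ∫ x in Omega3 L, ∑ j, DD L γ x i j * curlRow Φ i x j)}
      = {0} := by
    apply Subset.antisymm
    · rintro t ⟨Φ, hΦ, -, rfl⟩
      rw [Finset.sum_eq_zero (fun i _ => rowint_zero L γ Φ hΦ i)]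
      simp
    · rintro t ht
      rw [mem_singleton_iff] at ht
      subst ht
      refine ⟨fun _ => (0 : Mat3), fun i j => ?_, fun x i j => by simp, ?_⟩
      · simpa using isTest_zero L
      · have hz : ∀ i : Fin 3, i ∈ Finset.univ →
            (∫ x in Omega3 L, ∑ j, DD L γ x i j * curlRow (fun _ => (0:Mat3)) i x j) = 0 := by
          intro i _
          have hz' : ∀ x, (∑ j, DD L γ x i j * curlRow (fun _ => (0:Mat3)) i x j) = 0 := by
            intro x
            simp [curlRow, pd3, Fin.sum_univ_three]
          rw [integral_congr_ae (Eventually.of_forall hz'), integral_zero]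
        rw [Finset.sum_eq_zero hz]
        simp
  rw [TVcurl3, hset, sSup_singleton]

lemma elastic_DD (L : ℝ) (γ : ℝ) : Elastic3 L (DD L γ) (DD L γ) = 0 := by
  have hz : ∀ x : Pt3, ENNReal.ofReal (normSq3 (symPart3 (DD L γ x - DD L γ x))) = 0 := by
    intro x
    simp [sub_self, symPart3, normSq3]
  rw [Elastic3, lintegral_congr hz, lintegral_zero]

lemma memlp_DD (L γ : ℝ) (i j : Fin 3) :
    MemLp (fun x => DD L γ x i j) 2 (volume.restrict (Omega3 L)) := by
  haveI : IsFiniteMeasure (volume.restrict (Omega3 L)) :=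
    ⟨by rw [Measure.restrict_apply_univ]; exact volume_Omega3_lt_top L⟩
  obtain ⟨C, hC⟩ := (isCompact_closure_Omega3 L).exists_bound_of_continuousOn
    (contDiff_DD L γ i j).continuous.continuousOn
  have hb : ∀ᵐ x ∂(volume.restrict (Omega3 L)), ‖DD L γ x i j‖ ≤ C :=
    (ae_restrict_mem (isOpen_Omega3 L).measurableSet).mono fun x hx =>
      hC x (subset_closure hx)
  exact (memLp_top_of_bound (contDiff_DD L γ i j).continuous.aestronglyMeasurable C hb
    ).mono_exponent le_top

/-- For the three-dimensional B2-crystal model, if L > 2 then the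
infimum of the energy over admissible pairs satisfying the horizontal-shear boundary
condition is zero; in fact there is an admissible pair with zero energy. -/
theorem three_d_zero_energy (L σ γ : ℝ) (hσ : 0 < σ) (hγ : 0 < γ) (hL : 2 < L) :
    sInf {e | ∃ u Du β, IsAdmissible3 L γ u Du β ∧ TVcurl3 L β ≠ ⊤ ∧
        e = Energy3 L σ Du β} = 0 ∧
    ∃ u Du β, IsAdmissible3 L γ u Du β ∧ TVcurl3 L β ≠ ⊤ ∧ Energy3 L σ Du β = 0 := by
  have hadm : IsAdmissible3 L γ (uu L γ) (DD L γ) (DD L γ) := by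
    refine ⟨(continuous_uu L γ).continuousOn, ?_, memlp_DD L γ, ?_, singleSlip_DD hL γ,
      uu_bottom hL γ, uu_top hL γ⟩
    · intro f hf i j
      rw [ibp3 (fun y => uu L γ y i) f (contDiff_uu L γ i) hf j]
      congr 1
      refine integral_congr_ae (Eventually.of_forall fun x => ?_)
      show pd3 j (fun y => uu L γ y i) x * f x = DD L γ x i j * f x
      rw [pd3_uu]
    · intro i j
      exact ((contDiff_DD L γ i j).continuous.continuousOn).locallyIntegrableOn
        (isOpen_Omega3 L).measurableSet
  have hTV : TVcurl3 L (DD L γ) ≠ ⊤ := by rw [TVcurl_DD]; exact ENNReal.zero_ne_top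
  have hE : Energy3 L σ (DD L γ) (DD L γ) = 0 := by
    rw [Energy3, elastic_DD, TVcurl_DD, mul_zero, add_zero]
  refine ⟨le_antisymm (sInf_le ⟨uu L γ, DD L γ, DD L γ, hadm, hTV, hE.symm⟩) zero_le,
    uu L γ, DD L γ, DD L γ, hadm, hTV, hE⟩


end main

end
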